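/- Assume the ensemble setup and fix s ≥ 0. If σ̂_n^{2s} = o(n^{1/2}) as n → ∞ (i.e. σ̂_n^{2s}/√n → 0), then the odd expected spectral moments vanish asymptotically: m̄_{2s+1}^{(n)} → 0 as n → ∞. -/

import Mathlib

open MeasureTheory ProbabilityTheory Filter

/-- The random matrix `A_n` with entries `a i j / √n` (indices in `{1,…,n}`). -/
noncomputable def matA {Ω : Type} (a : ℕ → ℕ → Ω → ℝ) (n : ℕ) (ω : Ω) :
    Matrix (Fin n) (Fin n) ℝ :=
  Matrix.of fun u v => a (u.1 + 1) (v.1 + 1) ω / Real.sqrt n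

/-- The `k`-th spectral moment `m_k^{(n)} = (1/n)·trace(A_n^k)`. -/
noncomputable def specMom {Ω : Type} (a : ℕ → ℕ → Ω → ℝ) (n k : ℕ) (ω : Ω) : ℝ :=
  (1 / (n : ℝ)) * Matrix.trace ((matA a n ω) ^ k)

/-- The `k`-th expected spectral moment `m̄_k^{(n)} = E[m_k^{(n)}]`. -/
noncomputable def expSpecMom {Ω : Type} [MeasurableSpace Ω] (P : Measure Ω)
    (a : ℕ → ℕ → Ω → ℝ) (n k : ℕ) : ℝ :=
  ∫ ω, specMom a n k ω ∂P

/-- `σ̂_n = max_{1 ≤ i ≤ n} σ i`. -/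
noncomputable def sigHat (σ : ℕ → ℝ) (n : ℕ) : ℝ := sSup (σ '' Set.Icc 1 n)

section Aux

open Finset

/- ## Trace of a power as a sum over closed walks -/

lemma trace_mul_pow {n : ℕ} (A : Matrix (Fin n) (Fin n) ℝ) (m : ℕ) (B : Matrix (Fin n) (Fin n) ℝ) :
    Matrix.trace (B * A ^ m) =
      ∑ x : Fin (m+1) → Fin n,
        B (x (Fin.last m)) (x 0) * ∏ l : Fin m, A (x l.castSucc) (x l.succ) := by
  induction m generalizing B with
  | zero =>
      simp [Matrix.trace, Matrix.diag]
      rw [← (Equiv.funUnique (Fin 1) (Fin n)).symm.sum_comp]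
      simp [Equiv.funUnique]
  | succ m ih =>
      have h1 : B * A ^ (m+1) = (B * A) * A ^ m := by rw [pow_succ', ← mul_assoc]
      rw [h1, ih (B * A)]
      rw [← (Fin.consEquiv (fun _ : Fin (m+2) => Fin n)).sum_comp, Fintype.sum_prod_type]
      simp only [Fin.consEquiv_apply]
      have h2 : ∀ x : Fin (m+1) → Fin n,
          (B * A) (x (Fin.last m)) (x 0) * ∏ l : Fin m, A (x l.castSucc) (x l.succ)
          = ∑ v : Fin n, B (x (Fin.last m)) v * A v (x 0) * ∏ l : Fin m, A (x l.castSucc) (x l.succ) := by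
        intro x; rw [Matrix.mul_apply, Finset.sum_mul]
      simp_rw [h2]
      rw [Finset.sum_comm]
      congr 1; funext v; congr 1; funext x
      rw [Fin.prod_univ_succ]
      have e0 : (Fin.cons v x : Fin (m+2) → Fin n) ((0 : Fin (m+1)).castSucc) = v := by
        simp
      have e1 : (Fin.cons v x : Fin (m+2) → Fin n) ((0 : Fin (m+1)).succ) = x 0 := by
        simp [Fin.cons_succ]
      have e2 : (Fin.cons v x : Fin (m+2) → Fin n) (Fin.last (m+1)) = x (Fin.last m) := by
        rw [← Fin.succ_last, Fin.cons_succ]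
      have e3 : ∀ l : Fin m, (Fin.cons v x : Fin (m+2) → Fin n) (l.succ.castSucc) = x l.castSucc := by
        intro l; rw [← Fin.succ_castSucc, Fin.cons_succ]
      have e4 : ∀ l : Fin m, (Fin.cons v x : Fin (m+2) → Fin n) (l.succ.succ) = x l.succ := by
        intro l; rw [Fin.cons_succ]
      simp only [e0, e1, e2, Fin.cons_zero]
      have e5 : (∏ l : Fin m, A ((Fin.cons v x : Fin (m+2) → Fin n) (l.succ.castSucc))
            ((Fin.cons v x : Fin (m+2) → Fin n) (l.succ.succ)))
          = ∏ l : Fin m, A (x l.castSucc) (x l.succ) :=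
        Finset.prod_congr rfl fun l _ => by rw [e3 l, e4 l]
      rw [e5]
      ring

lemma trace_pow_cyc {n : ℕ} (A : Matrix (Fin n) (Fin n) ℝ) (m : ℕ) :
    Matrix.trace (A ^ (m+1)) =
      ∑ x : Fin (m+1) → Fin n, ∏ l : Fin (m+1), A (x l) (x (l + 1)) := by
  rw [pow_succ', trace_mul_pow]
  congr 1; funext x
  rw [Fin.prod_univ_castSucc]
  simp only [Fin.coeSucc_eq_succ, Fin.last_add_one]
  ring

/- ## Integral of a product of independent random variables -/

lemma integral_indep_prod {Ω : Type} [MeasurableSpace Ω] {P : Measure Ω} [IsProbabilityMeasure P]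
    {ι : Type} [DecidableEq ι] {f : ι → Ω → ℝ}
    (hm : ∀ i, Measurable (f i))
    (hind : iIndepFun f P) (T : Finset ι) :
    ∫ ω, ∏ i ∈ T, f i ω ∂P = ∏ i ∈ T, ∫ ω, f i ω ∂P := by
  induction T using Finset.induction_on with
  | empty => simp
  | insert c T hi ih =>
      simp_rw [Finset.prod_insert hi]
      have hprod : Measurable (fun ω => ∏ i ∈ T, f i ω) :=
        Finset.measurable_prod T (fun i _ => hm i)
      have hI : IndepFun (f c) (fun ω => ∏ i ∈ T, f i ω) P := by
        have := (hind.indepFun_finsetProd_of_notMem hm hi).symm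
        convert this using 1
        ext ω; simp
      have := hI.integral_mul_eq_mul_integral (hm c).aestronglyMeasurable hprod.aestronglyMeasurable
      calc ∫ ω, f c ω * ∏ i ∈ T, f i ω ∂P
          = (∫ ω, f c ω ∂P) * ∫ ω, ∏ i ∈ T, f i ω ∂P := this
        _ = _ := by rw [ih]

/- ## Edges of a walk -/

def edgeOf {n : ℕ} (u v : Fin n) : {q : ℕ × ℕ // 1 ≤ q.1 ∧ q.1 ≤ q.2} :=
  ⟨(min (u.1+1) (v.1+1), max (u.1+1) (v.1+1)),
    ⟨le_min (by omega) (by omega), min_le_max⟩⟩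

lemma edgeOf_cases {n : ℕ} {u v u' v' : Fin n} (h : edgeOf u v = edgeOf u' v') :
    (u = u' ∧ v = v') ∨ (u = v' ∧ v = u') := by
  have h1 : min (u.1+1) (v.1+1) = min (u'.1+1) (v'.1+1) := congrArg (fun q => q.1.1) h
  have h2 : max (u.1+1) (v.1+1) = max (u'.1+1) (v'.1+1) := congrArg (fun q => q.1.2) h
  have : (u.1 = u'.1 ∧ v.1 = v'.1) ∨ (u.1 = v'.1 ∧ v.1 = u'.1) := by omega
  rcases this with ⟨ha, hb⟩ | ⟨ha, hb⟩
  · exact Or.inl ⟨Fin.ext ha, Fin.ext hb⟩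
  · exact Or.inr ⟨Fin.ext ha, Fin.ext hb⟩

lemma walk_card_le {n m : ℕ} (x : Fin (m+1) → Fin n) :
    (univ.image x).card ≤ (univ.image (fun l : Fin (m+1) => edgeOf (x l) (x (l+1)))).card + 1 := by
  have hk : 0 < m + 1 := Nat.succ_pos m
  set x' : ℕ → Fin n := fun l => x ⟨l % (m+1), Nat.mod_lt _ hk⟩ with hx'
  set e' : ℕ → {q : ℕ × ℕ // 1 ≤ q.1 ∧ q.1 ≤ q.2} := fun l => edgeOf (x' l) (x' (l+1)) with he'
  have aux : ∀ t, ((range (t+1)).image x').card ≤ ((range t).image e').card + 1 := by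
    intro t
    induction t with
    | zero => simp
    | succ t ih =>
        rw [range_add_one, image_insert]
        by_cases hmem : x' (t+1) ∈ (range (t+1)).image x'
        · calc (insert (x' (t+1)) ((range (t+1)).image x')).card
              = ((range (t+1)).image x').card := by rw [Finset.insert_eq_self.2 hmem]
            _ ≤ ((range t).image e').card + 1 := ih
            _ ≤ ((range (t+1)).image e').card + 1 := Nat.add_le_add_right
                  (Finset.card_le_card (Finset.image_subset_image (range_subset_range.2 (Nat.le_succ t)))) 1
        · have hnew : e' t ∉ (range t).image e' := by
            intro hc
            rcases Finset.mem_image.1 hc with ⟨l, hl, hle⟩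
            rcases edgeOf_cases hle with ⟨_, hb⟩ | ⟨ha, _⟩
            · exact hmem (Finset.mem_image.2 ⟨l+1, Finset.mem_range.2 (by
                have := Finset.mem_range.1 hl; omega), hb⟩)
            · exact hmem (Finset.mem_image.2 ⟨l, Finset.mem_range.2 (by
                have := Finset.mem_range.1 hl; omega), ha⟩)
          calc (insert (x' (t+1)) ((range (t+1)).image x')).card
              ≤ ((range (t+1)).image x').card + 1 := Finset.card_insert_le _ _
            _ ≤ (((range t).image e').card + 1) + 1 := Nat.add_le_add_right ih 1
            _ = (insert (e' t) ((range t).image e')).card + 1 := by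
                rw [Finset.card_insert_of_notMem hnew]
            _ = ((range (t+1)).image e').card + 1 := by rw [range_add_one, image_insert]
  have hV : (range (m+1)).image x' = univ.image x := by
    ext b
    simp only [Finset.mem_image, Finset.mem_range, Finset.mem_univ, true_and]
    constructor
    · rintro ⟨l, hl, rfl⟩; exact ⟨⟨l % (m+1), Nat.mod_lt _ hk⟩, rfl⟩
    · rintro ⟨l, rfl⟩
      exact ⟨l.1, l.2, congrArg x (Fin.ext (Nat.mod_eq_of_lt l.2))⟩
  have hE : (range (m+1)).image e' ⊆ univ.image (fun l : Fin (m+1) => edgeOf (x l) (x (l+1))) := by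
    intro q hq
    rcases Finset.mem_image.1 hq with ⟨l, hl, rfl⟩
    have hl' := Finset.mem_range.1 hl
    refine Finset.mem_image.2 ⟨⟨l, hl'⟩, Finset.mem_univ _, ?_⟩
    have hv1 : x' l = x ⟨l, hl'⟩ := congrArg x (Fin.ext (Nat.mod_eq_of_lt hl'))
    have hv2 : x' (l+1) = x (⟨l, hl'⟩ + 1) := by
      apply congrArg x
      apply Fin.ext
      simp only [Fin.add_def, Fin.val_one']
      have harith : ∀ kk : ℕ, (l + 1 % (kk+1)) % (kk+1) = (l + 1) % (kk+1) := by
        intro kk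
        rcases Nat.eq_zero_or_pos kk with rfl | hkk
        · simp
        · rw [Nat.mod_eq_of_lt (show 1 < kk + 1 by omega)]
      exact (harith m).symm
    rw [← hv1, ← hv2]
  calc (univ.image x).card = ((range (m+1)).image x').card := by rw [hV]
    _ ≤ ((range m).image e').card + 1 := aux m
    _ ≤ ((range (m+1)).image e').card + 1 := Nat.add_le_add_right
        (Finset.card_le_card (Finset.image_subset_image (range_subset_range.2 (by omega)))) 1
    _ ≤ _ := Nat.add_le_add_right (Finset.card_le_card hE) 1

/- ## Counting walks with few vertices -/

lemma card_small_walks {n k t : ℕ} (hn : 0 < n) :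
    ((univ : Finset (Fin k → Fin n)).filter
        (fun x => (univ.image x).card ≤ t)).card ≤ t ^ k * n ^ t := by
  classical
  have hsub : (univ : Finset (Fin k → Fin n)).filter (fun x => (univ.image x).card ≤ t)
      ⊆ (univ : Finset ((Fin k → Fin t) × (Fin t → Fin n))).image (fun p => p.2 ∘ p.1) := by
    intro x hx
    have hL : ((univ : Finset (Fin k)).image x).card ≤ t := (Finset.mem_filter.1 hx).2
    set L := (univ : Finset (Fin k)).image x with hLdef
    have ψ := L.orderIsoOfFin rfl
    have hmem : ∀ l, x l ∈ L := fun l => Finset.mem_image_of_mem x (Finset.mem_univ l)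
    refine Finset.mem_image.2 ⟨(fun l => Fin.castLE hL (ψ.symm ⟨x l, hmem l⟩),
      fun w => if h : w.1 < L.card then (ψ ⟨w.1, h⟩ : Fin n) else ⟨0, hn⟩),
      Finset.mem_univ _, ?_⟩
    funext l
    simp only [Function.comp_apply]
    have hlt : (Fin.castLE hL (ψ.symm ⟨x l, hmem l⟩)).1 < L.card := (ψ.symm ⟨x l, hmem l⟩).2
    rw [dif_pos hlt]
    have : (⟨(Fin.castLE hL (ψ.symm ⟨x l, hmem l⟩)).1, hlt⟩ : Fin L.card)
        = ψ.symm ⟨x l, hmem l⟩ := Fin.ext rfl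
    rw [this, OrderIso.apply_symm_apply]
  calc _ ≤ ((univ : Finset ((Fin k → Fin t) × (Fin t → Fin n))).image (fun p => p.2 ∘ p.1)).card :=
        Finset.card_le_card hsub
    _ ≤ (univ : Finset ((Fin k → Fin t) × (Fin t → Fin n))).card := Finset.card_image_le
    _ = t ^ k * n ^ t := by simp [Fintype.card_prod]

/- ## Integrability and moment bounds -/

lemma integrable_of_abs_bdd {Ω : Type} [MeasurableSpace Ω] {P : Measure Ω} [IsProbabilityMeasure P]
    {f : Ω → ℝ} (hm : Measurable f) {C : ℝ} (hb : ∀ᵐ ω ∂P, |f ω| ≤ C) : Integrable f P :=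
  Integrable.mono' (integrable_const C) hm.aestronglyMeasurable
    (by filter_upwards [hb] with ω h using by rwa [Real.norm_eq_abs])

lemma edge_moment_bound {Ω : Type} [MeasurableSpace Ω] (P : Measure Ω) [IsProbabilityMeasure P]
    {K : ℝ} {f : Ω → ℝ} (hm : Measurable f) (hb : ∀ᵐ ω ∂P, |f ω| < K)
    {v : ℝ} (hv : ∫ ω, (f ω) ^ 2 ∂P = v) {m : ℕ} (hm2 : 2 ≤ m) :
    |∫ ω, (f ω) ^ m ∂P| ≤ K ^ (m - 2) * v := by
  have hpow : ∀ j : ℕ, Integrable (fun ω => (f ω) ^ j) P := by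
    intro j
    refine integrable_of_abs_bdd (hm.pow_const j) (C := K ^ j) ?_
    filter_upwards [hb] with ω h
    rw [abs_pow]
    exact pow_le_pow_left₀ (abs_nonneg _) h.le j
  have h1 : |∫ ω, (f ω) ^ m ∂P| ≤ ∫ ω, |(f ω) ^ m| ∂P := by
    simpa [Real.norm_eq_abs] using norm_integral_le_integral_norm (μ := P) (fun ω => (f ω) ^ m)
  have h2 : ∫ ω, |(f ω) ^ m| ∂P ≤ ∫ ω, K ^ (m - 2) * (f ω) ^ 2 ∂P := by
    refine integral_mono_ae (hpow m).abs ((hpow 2).const_mul _) ?_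
    filter_upwards [hb] with ω h
    have h0 : |f ω| ^ m = |f ω| ^ (m - 2) * |f ω| ^ 2 := by
      rw [← pow_add]; congr 1; omega
    calc |(f ω) ^ m| = |f ω| ^ (m - 2) * |f ω| ^ 2 := by rw [abs_pow, h0]
      _ ≤ K ^ (m - 2) * (f ω) ^ 2 := by
          rw [sq_abs]
          exact mul_le_mul_of_nonneg_right (pow_le_pow_left₀ (abs_nonneg _) h.le _) (sq_nonneg _)
  calc |∫ ω, (f ω) ^ m ∂P| ≤ ∫ ω, K ^ (m - 2) * (f ω) ^ 2 ∂P := h1.trans h2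
    _ = K ^ (m - 2) * v := by rw [integral_const_mul, hv]

end Aux

/-- **Zero odd moments**: if `σ̂_n^{2s} = o(√n)`, then `m̄_{2s+1}^{(n)} → 0`. -/
theorem odd_moments_vanish {Ω : Type} [MeasurableSpace Ω]
    (P : Measure Ω) [IsProbabilityMeasure P]
    (K : ℝ) (hK : 0 < K)
    (σ : ℕ → ℝ) (hσpos : ∀ i, 1 ≤ i → 0 < σ i)
    (a : ℕ → ℕ → Ω → ℝ)
    (hmeas : ∀ i j, Measurable (a i j))
    (hsymm : ∀ i j, a i j = a j i)
    (hindep : iIndepFun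
      (fun q : {q : ℕ × ℕ // 1 ≤ q.1 ∧ q.1 ≤ q.2} => a q.1.1 q.1.2) P)
    (hmean : ∀ i j, 1 ≤ i → 1 ≤ j → ∫ ω, a i j ω ∂P = 0)
    (hvar : ∀ i j, 1 ≤ i → 1 ≤ j → ∫ ω, (a i j ω) ^ 2 ∂P = σ i * σ j)
    (hbdd : ∀ i j, 1 ≤ i → 1 ≤ j → ∀ᵐ ω ∂P, |a i j ω| < K)
    (s : ℕ)
    (hsmall : Tendsto (fun n : ℕ => sigHat σ n ^ (2 * s) / Real.sqrt n) atTop (nhds 0)) :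
    Tendsto (fun n : ℕ => expSpecMom P a n (2 * s + 1)) atTop (nhds 0) := by
  classical
  set M := max 1 K with hM
  set C := ((s+1 : ℝ)) ^ (2*s+1) * M ^ (2*s+1) with hC
  have hM1 : (1:ℝ) ≤ M := le_max_left 1 K
  have hC0 : 0 ≤ C := mul_nonneg (pow_nonneg (by positivity) _) (pow_nonneg (by linarith) _)
  -- σ̂ facts
  have hsig_le : ∀ n i, 1 ≤ i → i ≤ n → σ i ≤ sigHat σ n := by
    intro n i h1 h2
    exact le_csSup ((Set.finite_Icc 1 n).image σ).bddAbove ⟨i, ⟨h1, h2⟩, rfl⟩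
  have hsig_nonneg : ∀ n, 1 ≤ n → 0 ≤ sigHat σ n := fun n hn =>
    le_trans (hσpos 1 le_rfl).le (hsig_le n 1 le_rfl hn)
  -- the key quantitative bound
  have key : ∀ n : ℕ, 1 ≤ n →
      |expSpecMom P a n (2*s+1)| ≤
        C * (1 / Real.sqrt n) + C * (sigHat σ n ^ (2*s) / Real.sqrt n) := by
    intro n hn
    have hn0 : (0:ℝ) < n := by exact_mod_cast hn
    have hsq : 0 < Real.sqrt n := Real.sqrt_pos.2 hn0
    have hsig0 : 0 ≤ sigHat σ n := hsig_nonneg n hn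
    -- the walk products
    set W : (Fin (2*s+1) → Fin n) → Ω → ℝ :=
      fun x ω => ∏ l : Fin (2*s+1), a ((x l).1+1) ((x (l+1)).1+1) ω with hWdef
    have hWmeas : ∀ x, Measurable (W x) := fun x =>
      Finset.measurable_prod _ (fun l _ => hmeas _ _)
    have hWbd : ∀ x, ∀ᵐ ω ∂P, |W x ω| ≤ K ^ (2*s+1) := by
      intro x
      have hall : ∀ᵐ ω ∂P, ∀ l : Fin (2*s+1), |a ((x l).1+1) ((x (l+1)).1+1) ω| < K :=
        (MeasureTheory.ae_all_iff).2 fun l => hbdd _ _ (by omega) (by omega)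
      filter_upwards [hall] with ω h
      calc |W x ω| = ∏ l : Fin (2*s+1), |a ((x l).1+1) ((x (l+1)).1+1) ω| := by
            simp only [hWdef]; exact Finset.abs_prod _ _
        _ ≤ ∏ _l : Fin (2*s+1), K :=
            Finset.prod_le_prod (fun _ _ => abs_nonneg _) (fun l _ => (h l).le)
        _ = K ^ (2*s+1) := by simp
    have hWint : ∀ x, Integrable (W x) P := fun x => integrable_of_abs_bdd (hWmeas x) (hWbd x)
    -- expansion of the expected moment
    have hexp : expSpecMom P a n (2*s+1)
        = (1/(n:ℝ)) * (1/(Real.sqrt n)^(2*s+1)) *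
          ∑ x : Fin (2*s+1) → Fin n, ∫ ω, W x ω ∂P := by
      have hfun : ∀ ω, specMom a n (2*s+1) ω
          = (1/(n:ℝ)) * (1/(Real.sqrt n)^(2*s+1)) * ∑ x : Fin (2*s+1) → Fin n, W x ω := by
        intro ω
        rw [specMom, trace_pow_cyc (matA a n ω) (2*s)]
        have hterm : ∀ x : Fin (2*s+1) → Fin n,
            ∏ l : Fin (2*s+1), (matA a n ω) (x l) (x (l+1))
            = W x ω * (1/(Real.sqrt n)^(2*s+1)) := by
          intro x
          simp only [hWdef, matA, Matrix.of_apply]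
          rw [Finset.prod_div_distrib, Finset.prod_const]
          simp [div_eq_mul_inv, one_div]
        rw [Finset.sum_congr rfl (fun x _ => hterm x), ← Finset.sum_mul]
        ring
      calc ∫ ω, specMom a n (2*s+1) ω ∂P
          = ∫ ω, (1/(n:ℝ)) * (1/(Real.sqrt n)^(2*s+1)) *
              ∑ x : Fin (2*s+1) → Fin n, W x ω ∂P :=
            integral_congr_ae (Filter.Eventually.of_forall hfun)
        _ = (1/(n:ℝ)) * (1/(Real.sqrt n)^(2*s+1)) *
              ∑ x : Fin (2*s+1) → Fin n, ∫ ω, W x ω ∂P := by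
            rw [integral_const_mul, integral_finset_sum _ (fun x _ => hWint x)]
    -- edges and multiplicities
    set E : (Fin (2*s+1) → Fin n) → Finset {q : ℕ × ℕ // 1 ≤ q.1 ∧ q.1 ≤ q.2} :=
      fun x => Finset.univ.image (fun l : Fin (2*s+1) => edgeOf (x l) (x (l+1))) with hEdef
    set mu : (Fin (2*s+1) → Fin n) → {q : ℕ × ℕ // 1 ≤ q.1 ∧ q.1 ≤ q.2} → ℕ :=
      fun x q => (Finset.univ.filter
        (fun l : Fin (2*s+1) => edgeOf (x l) (x (l+1)) = q)).card with hmudef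
    have hsymmE : ∀ u v : Fin n, ∀ ω,
        a (u.1+1) (v.1+1) ω = a (edgeOf u v).1.1 (edgeOf u v).1.2 ω := by
      intro u v ω
      rcases le_total u.1 v.1 with h | h
      · have e1 : (edgeOf u v).1.1 = u.1+1 := min_eq_left (by omega)
        have e2 : (edgeOf u v).1.2 = v.1+1 := max_eq_right (by omega)
        rw [e1, e2]
      · have e1 : (edgeOf u v).1.1 = v.1+1 := min_eq_right (by omega)
        have e2 : (edgeOf u v).1.2 = u.1+1 := max_eq_left (by omega)
        rw [e1, e2, hsymm (u.1+1) (v.1+1)]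
    have hWeq : ∀ x, ∫ ω, W x ω ∂P
        = ∏ q ∈ E x, ∫ ω, (a q.1.1 q.1.2 ω) ^ (mu x q) ∂P := by
      intro x
      have h1 : W x = fun ω => ∏ q ∈ E x, (a q.1.1 q.1.2 ω) ^ (mu x q) := by
        funext ω
        simp only [hWdef, hEdef, hmudef]
        calc ∏ l : Fin (2*s+1), a ((x l).1+1) ((x (l+1)).1+1) ω
            = ∏ l : Fin (2*s+1), (fun q : {q : ℕ × ℕ // 1 ≤ q.1 ∧ q.1 ≤ q.2} =>
                a q.1.1 q.1.2 ω) (edgeOf (x l) (x (l+1))) :=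
              Finset.prod_congr rfl (fun l _ => hsymmE _ _ ω)
          _ = _ := Finset.prod_comp
                (fun q : {q : ℕ × ℕ // 1 ≤ q.1 ∧ q.1 ≤ q.2} => a q.1.1 q.1.2 ω)
                (fun l : Fin (2*s+1) => edgeOf (x l) (x (l+1)))
      rw [h1]
      exact integral_indep_prod (fun q => (hmeas _ _).pow_const _)
        (hindep.comp (fun q t => t ^ mu x q) (fun q => measurable_id.pow_const _)) (E x)
    have hEmem : ∀ x q, q ∈ E x → q.1.2 ≤ n := by
      intro x q hq
      simp only [hEdef] at hq
      rcases Finset.mem_image.1 hq with ⟨l, _, rfl⟩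
      have h1 := (x l).2
      have h2 := (x (l+1)).2
      simp only [edgeOf]
      omega
    have hmu_pos : ∀ x q, q ∈ E x → 1 ≤ mu x q := by
      intro x q hq
      simp only [hEdef] at hq
      rcases Finset.mem_image.1 hq with ⟨l, _, hl⟩
      simp only [hmudef]
      exact Finset.card_pos.2 ⟨l, Finset.mem_filter.2 ⟨Finset.mem_univ _, hl⟩⟩
    have hmu_sum : ∀ x, ∑ q ∈ E x, mu x q = 2*s+1 := by
      intro x
      have h := Finset.card_eq_sum_card_fiberwise
        (f := fun l : Fin (2*s+1) => edgeOf (x l) (x (l+1)))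
        (s := Finset.univ) (t := E x)
        (fun l _ => by
          simp only [hEdef]; exact Finset.mem_image_of_mem _ (Finset.mem_univ l))
      simp only [hmudef]
      rw [← h]
      simp
    set Bn := M ^ (2*s+1) * (1 + sigHat σ n ^ (2*s)) with hBndef
    have hsigpow0 : (0:ℝ) ≤ sigHat σ n ^ (2*s) := pow_nonneg hsig0 _
    have hM0 : (0:ℝ) ≤ M := by linarith
    have hBn0 : 0 ≤ Bn := mul_nonneg (pow_nonneg hM0 _) (by linarith)
    have hall2 : ∀ x, (∀ q ∈ E x, mu x q ≠ 1) → (E x).card ≤ s := by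
      intro x hcase
      have h2 : ∀ q ∈ E x, 2 ≤ mu x q := fun q hq => by
        have ha := hmu_pos x q hq; have hb := hcase q hq; omega
      have hcard2 : 2 * (E x).card ≤ 2*s+1 := by
        calc 2 * (E x).card = ∑ _q ∈ E x, 2 := by
              rw [Finset.sum_const, smul_eq_mul, mul_comm]
          _ ≤ ∑ q ∈ E x, mu x q := Finset.sum_le_sum h2
          _ = 2*s+1 := hmu_sum x
      omega
    have hzero : ∀ x, (∃ q ∈ E x, mu x q = 1) → ∫ ω, W x ω ∂P = 0 := by
      rintro x ⟨q, hq, hq1⟩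
      rw [hWeq x]
      refine Finset.prod_eq_zero hq ?_
      rw [hq1]
      simp only [pow_one]
      exact hmean _ _ q.2.1 (le_trans q.2.1 q.2.2)
    have hbound : ∀ x, |∫ ω, W x ω ∂P| ≤ Bn := by
      intro x
      by_cases hcase : ∃ q ∈ E x, mu x q = 1
      · rw [hzero x hcase, abs_zero]; exact hBn0
      · push_neg at hcase
        have h2 : ∀ q ∈ E x, 2 ≤ mu x q := fun q hq => by
          have ha := hmu_pos x q hq; have hb := hcase q hq; omega
        have hecard : (E x).card ≤ s := hall2 x hcase
        have hperedge : ∀ q ∈ E x, |∫ ω, (a q.1.1 q.1.2 ω) ^ (mu x q) ∂P|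
            ≤ K ^ (mu x q - 2) * (sigHat σ n)^2 := by
          intro q hq
          have hij1 : 1 ≤ q.1.1 := q.2.1
          have hij2 : 1 ≤ q.1.2 := le_trans q.2.1 q.2.2
          have h := edge_moment_bound P (hmeas q.1.1 q.1.2) (hbdd _ _ hij1 hij2)
            (hvar _ _ hij1 hij2) (h2 q hq)
          refine le_trans h (mul_le_mul_of_nonneg_left ?_ (pow_nonneg hK.le _))
          have hle1 : σ q.1.1 ≤ sigHat σ n :=
            hsig_le n _ hij1 (le_trans q.2.2 (hEmem x q hq))
          have hle2 : σ q.1.2 ≤ sigHat σ n := hsig_le n _ hij2 (hEmem x q hq)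
          rw [sq]
          exact mul_le_mul hle1 hle2 (hσpos _ hij2).le hsig0
        have hK_M : K ^ (∑ q ∈ E x, (mu x q - 2)) ≤ M ^ (2*s+1) := by
          have hle : (∑ q ∈ E x, (mu x q - 2)) ≤ 2*s+1 :=
            le_trans (Finset.sum_le_sum fun q _ => Nat.sub_le _ 2) (le_of_eq (hmu_sum x))
          calc K ^ (∑ q ∈ E x, (mu x q - 2)) ≤ M ^ (∑ q ∈ E x, (mu x q - 2)) :=
                pow_le_pow_left₀ hK.le (le_max_right 1 K) _
            _ ≤ M ^ (2*s+1) := pow_le_pow_right₀ hM1 hle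
        have hsig_pow : ((sigHat σ n)^2)^(E x).card ≤ 1 + sigHat σ n ^ (2*s) := by
          rw [← pow_mul]
          by_cases hb1 : sigHat σ n ≤ 1
          · have h1' := pow_le_one₀ hsig0 hb1 (n := 2 * (E x).card)
            linarith
          · push_neg at hb1
            have h1' : sigHat σ n ^ (2*(E x).card) ≤ sigHat σ n ^ (2*s) :=
              pow_le_pow_right₀ hb1.le (by omega)
            linarith
        calc |∫ ω, W x ω ∂P|
            = |∏ q ∈ E x, ∫ ω, (a q.1.1 q.1.2 ω)^(mu x q) ∂P| := by rw [hWeq x]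
          _ = ∏ q ∈ E x, |∫ ω, (a q.1.1 q.1.2 ω)^(mu x q) ∂P| := Finset.abs_prod _ _
          _ ≤ ∏ q ∈ E x, K ^ (mu x q - 2) * (sigHat σ n)^2 :=
              Finset.prod_le_prod (fun _ _ => abs_nonneg _) hperedge
          _ = K ^ (∑ q ∈ E x, (mu x q - 2)) * ((sigHat σ n)^2)^(E x).card := by
              rw [Finset.prod_mul_distrib, Finset.prod_pow_eq_pow_sum, Finset.prod_const]
          _ ≤ M ^ (2*s+1) * (1 + sigHat σ n ^ (2*s)) :=
              mul_le_mul hK_M hsig_pow (pow_nonneg (sq_nonneg _) _) (pow_nonneg hM0 _)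
    have hzero' : ∀ x, ¬ ((Finset.univ.image x).card ≤ s+1) → ∫ ω, W x ω ∂P = 0 := by
      intro x hx
      by_cases hcase : ∃ q ∈ E x, mu x q = 1
      · exact hzero x hcase
      · exfalso
        push_neg at hcase
        have hecard : (E x).card ≤ s := hall2 x hcase
        have hwc : (Finset.univ.image x).card ≤ (E x).card + 1 := by
          simp only [hEdef]
          exact walk_card_le x
        omega
    -- summing up
    set G := (Finset.univ : Finset (Fin (2*s+1) → Fin n)).filter
      (fun x => (Finset.univ.image x).card ≤ s+1) with hGdef
    have hsum0 : ∑ x ∈ G, ∫ ω, W x ω ∂P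
        = ∑ x : Fin (2*s+1) → Fin n, ∫ ω, W x ω ∂P := by
      simp only [hGdef]
      exact Finset.sum_filter_of_ne (fun x _ h => by
        by_contra hc; exact h (hzero' x hc))
    have hGcard : G.card ≤ (s+1)^(2*s+1) * n^(s+1) := by
      simp only [hGdef]
      exact card_small_walks (by omega)
    have hsumbd : |∑ x : Fin (2*s+1) → Fin n, ∫ ω, W x ω ∂P|
        ≤ (((s+1)^(2*s+1) * n^(s+1) : ℕ) : ℝ) * Bn := by
      rw [← hsum0]
      calc |∑ x ∈ G, ∫ ω, W x ω ∂P| ≤ ∑ x ∈ G, |∫ ω, W x ω ∂P| :=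
            Finset.abs_sum_le_sum_abs _ _
        _ ≤ G.card • Bn := Finset.sum_le_card_nsmul _ _ _ (fun x _ => hbound x)
        _ = (G.card : ℝ) * Bn := nsmul_eq_mul _ _
        _ ≤ (((s+1)^(2*s+1) * n^(s+1) : ℕ) : ℝ) * Bn :=
            mul_le_mul_of_nonneg_right (by exact_mod_cast hGcard) hBn0
    -- final arithmetic
    have hc1 : (0:ℝ) < 1/(n:ℝ) := by positivity
    have hc2 : (0:ℝ) < 1/(Real.sqrt n)^(2*s+1) := by positivity
    have hfinal : |expSpecMom P a n (2*s+1)|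
        = (1/(n:ℝ)) * (1/(Real.sqrt n)^(2*s+1)) *
          |∑ x : Fin (2*s+1) → Fin n, ∫ ω, W x ω ∂P| := by
      rw [hexp, abs_mul, abs_mul, abs_of_pos hc1, abs_of_pos hc2]
    have harith : (1/(n:ℝ)) * (1/(Real.sqrt n)^(2*s+1)) *
          ((((s+1)^(2*s+1) * n^(s+1) : ℕ) : ℝ) * Bn)
        = C * (1 / Real.sqrt n) + C * (sigHat σ n ^ (2*s) / Real.sqrt n) := by
      have hss : Real.sqrt n ^ (2*s+1) = (n:ℝ)^s * Real.sqrt n := by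
        rw [pow_succ, pow_mul, Real.sq_sqrt hn0.le]
      push_cast
      rw [hss, hBndef, hC]
      have hns : ((n:ℝ)^s) ≠ 0 := by positivity
      field_simp
      ring
    rw [hfinal]
    calc (1/(n:ℝ)) * (1/(Real.sqrt n)^(2*s+1)) *
          |∑ x : Fin (2*s+1) → Fin n, ∫ ω, W x ω ∂P|
        ≤ (1/(n:ℝ)) * (1/(Real.sqrt n)^(2*s+1)) *
          ((((s+1)^(2*s+1) * n^(s+1) : ℕ) : ℝ) * Bn) :=
          mul_le_mul_of_nonneg_left hsumbd (mul_pos hc1 hc2).le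
      _ = C * (1 / Real.sqrt n) + C * (sigHat σ n ^ (2*s) / Real.sqrt n) := harith
  -- conclusion by squeezing
  have h1 : Tendsto (fun n : ℕ => 1 / Real.sqrt n) atTop (nhds 0) := by
    have hs : Tendsto Real.sqrt atTop atTop := by
      apply tendsto_atTop_atTop_of_monotone (fun _ _ h => Real.sqrt_le_sqrt h)
      intro b; exact ⟨b^2, by rw [Real.sqrt_sq_eq_abs]; exact le_abs_self b⟩
    refine ((hs.comp tendsto_natCast_atTop_atTop).inv_tendsto_atTop).congr (fun n => ?_)
    simp [one_div]
  have hg : Tendsto (fun n : ℕ =>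
      C * (1 / Real.sqrt n) + C * (sigHat σ n ^ (2*s) / Real.sqrt n)) atTop (nhds 0) := by
    have := (h1.const_mul C).add (hsmall.const_mul C)
    simpa using this
  refine squeeze_zero_norm' ?_ hg
  filter_upwards [eventually_ge_atTop 1] with n hn
  simpa [Real.norm_eq_abs] using key n hn
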